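/- arXiv:1804.01859 — 2 statements merged into one kernel-verified Lean document; each statement's English description precedes it below -/
import Mathlib

section
/- Let V = {1,…,n} and let 𝓗 ⊆ 2^V be a hypergraph with 𝓗 ≠ ∅ and ∅ ∉ 𝓗. Suppose the following four conditions hold: (A0) 𝓗 is transversal-free; (B1) for every long position x ∈ ℤ_{≥0}^V and every integer z with m(x) ≤ z < 𝒯_𝓗(x) there exists a move x → x' such that x' is long and 𝒯_𝓗(x') = z; (C2) for every position x and every integer η with 1 ≤ η < y_𝓗(x) there exists a move x → x' such that m(x') = m(x) and y_𝓗(x') = η; (C3) for every position x and all integers μ, η with 0 ≤ μ < m(x) and m(x) − μ + 1 ≤ η ≤ y_𝓗(x) there exists a move x → x' such that m(x') = μ and y_𝓗(x') = η. Then 𝓗 is a JM hypergraph. -/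
open Finset

/-- An `H`-move in hypergraph NIM: strictly decrease every pile in `H`, keep others. -/
def HMove {n : ℕ} (H : Finset (Fin n)) (x x' : Fin n → ℕ) : Prop :=
  (∀ i ∈ H, x' i < x i) ∧ ∀ i ∉ H, x' i = x i

/-- A move in `NIM_𝓗`: an `H`-move for some hyperedge `H ∈ 𝓗`. -/
def Move {n : ℕ} (F : Set (Finset (Fin n))) (x x' : Fin n → ℕ) : Prop :=
  ∃ H ∈ F, HMove H x x'

/-- Minimal excludant of a set of naturals. -/
noncomputable def mex (S : Set ℕ) : ℕ := sInf {g : ℕ | g ∉ S}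

/-- The Sprague–Grundy function of `NIM_𝓗`, defined by well-founded recursion.
(The guard `∑ x' < ∑ x` is automatic whenever `∅ ∉ 𝓗`.) -/
noncomputable def grundy {n : ℕ} (F : Set (Finset (Fin n))) (x : Fin n → ℕ) : ℕ :=
  mex {g : ℕ | ∃ x', ∃ _h : Move F x x' ∧ (∑ i, x' i) < ∑ i, x i, grundy F x' = g}
termination_by ∑ i, x i
decreasing_by exact _h.2

/-- `N` consecutive moves are possible from `x`: there are hyperedges `H¹,…,H^N ∈ 𝓗`
whose partial sums of characteristic vectors stay `≤ x`. -/
def TetrisReach {n : ℕ} (F : Set (Finset (Fin n))) (x : Fin n → ℕ) (N : ℕ) : Prop :=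
  ∃ f : ℕ → Finset (Fin n), (∀ j < N, f j ∈ F) ∧
    ∀ j < N, ∀ i, (∑ l ∈ Finset.range (j + 1), if i ∈ f l then 1 else 0) ≤ x i

/-- The Tetris function: the largest `N` with `TetrisReach`. -/
noncomputable def tetris {n : ℕ} (F : Set (Finset (Fin n))) (x : Fin n → ℕ) : ℕ :=
  sSup {N | TetrisReach F x N}

/-- `m(x)`: the minimum pile size. -/
noncomputable def mval {n : ℕ} (x : Fin n → ℕ) : ℕ := sInf (Set.range x)

/-- `y_𝓗(x) = 𝒯_𝓗(x − m(x)e) + 1`. -/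
noncomputable def yval {n : ℕ} (F : Set (Finset (Fin n))) (x : Fin n → ℕ) : ℕ :=
  tetris F (fun i => x i - mval x) + 1

/-- `v_𝓗(x)`. -/
noncomputable def vval {n : ℕ} (F : Set (Finset (Fin n))) (x : Fin n → ℕ) : ℕ :=
  Nat.choose (yval F x) 2 + ((mval x - Nat.choose (yval F x) 2 - 1) % yval F x)

/-- A position is long if `m(x) ≤ C(y_𝓗(x), 2)`. -/
noncomputable def IsLong {n : ℕ} (F : Set (Finset (Fin n))) (x : Fin n → ℕ) : Prop :=
  mval x ≤ Nat.choose (yval F x) 2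

/-- The Jenkyns–Mayberry function `𝒰_𝓗`. -/
noncomputable def jmU {n : ℕ} (F : Set (Finset (Fin n))) (x : Fin n → ℕ) : ℕ :=
  if mval x ≤ Nat.choose (yval F x) 2 then tetris F x else vval F x

/-- `𝓗` is a JM hypergraph if its SG function is given by the JM formula. -/
def IsJM {n : ℕ} (F : Set (Finset (Fin n))) : Prop :=
  ∀ x : Fin n → ℕ, grundy F x = jmU F x

/-- `T` is a transversal of `𝓗` if it meets every hyperedge. -/
def IsTransversal {n : ℕ} (F : Set (Finset (Fin n))) (T : Finset (Fin n)) : Prop :=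
  ∀ H ∈ F, (T ∩ H).Nonempty

/-- `𝓗` is transversal-free if no hyperedge is a transversal. -/
def TransversalFree {n : ℕ} (F : Set (Finset (Fin n))) : Prop :=
  ∀ H ∈ F, ¬ IsTransversal F H

/-- The induced subhypergraph `𝓗_S`. -/
def inducedH {n : ℕ} (F : Set (Finset (Fin n))) (S : Finset (Fin n)) : Set (Finset (Fin n)) :=
  {H | H ∈ F ∧ H ⊆ S}

/-- `𝓗` is minimal transversal-free. -/
def MinTransversalFree {n : ℕ} (F : Set (Finset (Fin n))) : Prop :=
  TransversalFree F ∧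
    ∀ S : Finset (Fin n), S ⊂ Finset.univ → (inducedH F S).Nonempty →
      ¬ TransversalFree (inducedH F S)

/-- The symmetric hypergraph `𝓗(λ)` of a spectrum `λ₁ < ⋯ < λ_k` (1-indexed). -/
def Hlambda {n : ℕ} (k : ℕ) (gl : ℕ → ℕ) : Set (Finset (Fin n)) :=
  {H | ∃ j, 1 ≤ j ∧ j ≤ k ∧ H.card = gl j}

section JMaux

variable {n : ℕ} {F : Set (Finset (Fin n))}

/-! ### arithmetic helpers -/

lemma choose_two_succ (t : ℕ) : (t+1).choose 2 = t.choose 2 + t := by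
  rw [Nat.choose_succ_succ]; simp [Nat.add_comm]

lemma le_choose_two_succ (t : ℕ) : t ≤ (t+1).choose 2 := by
  rw [choose_two_succ]; omega

lemma choose_two_add_le {a b : ℕ} (ha : 1 ≤ a) (h : a < b) :
    a.choose 2 + a ≤ b.choose 2 := by
  calc a.choose 2 + a = (a+1).choose 2 := (choose_two_succ a).symm
  _ ≤ b.choose 2 := Nat.choose_le_choose 2 h

/-- the interval `[C(y,2), C(y,2)+y)` determines `y` (for `y ≥ 1`). -/
lemma v_interval_eq {y1 y2 v : ℕ} (h1 : 1 ≤ y1) (h2 : 1 ≤ y2)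
    (ha : y1.choose 2 ≤ v) (hb : v < y1.choose 2 + y1)
    (hc : y2.choose 2 ≤ v) (hd : v < y2.choose 2 + y2) : y1 = y2 := by
  by_contra hne
  rcases Nat.lt_or_ge y1 y2 with h | h
  · have := choose_two_add_le h1 h; omega
  · have := choose_two_add_le h2 (by omega : y2 < y1); omega

/-- `η(g)`: the unique `η ≥ 1` with `C(η,2) ≤ g < C(η+1,2)`. -/
def etaOf (g : ℕ) : ℕ := Nat.findGreatest (fun t => t.choose 2 ≤ g) (g+1)

lemma etaOf_pos (g : ℕ) : 1 ≤ etaOf g :=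
  Nat.le_findGreatest (by omega) (by simp)

lemma etaOf_spec (g : ℕ) : (etaOf g).choose 2 ≤ g :=
  Nat.findGreatest_spec (P := fun t => t.choose 2 ≤ g) (m := 1) (by omega) (by simp)

lemma etaOf_lt (g : ℕ) : g < (etaOf g).choose 2 + etaOf g := by
  rw [← choose_two_succ]
  by_cases h : etaOf g + 1 ≤ g + 1
  · have := Nat.findGreatest_is_greatest (P := fun t => t.choose 2 ≤ g)
      (lt_add_one (etaOf g)) h
    omega
  · have h1 : etaOf g = g + 1 := le_antisymm (Nat.findGreatest_le _) (by omega)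
    rw [h1]
    have := le_choose_two_succ (g+1)
    omega

/-! ### mex -/

lemma mex_eq_of {S : Set ℕ} {u : ℕ} (h1 : ∀ g, g < u → g ∈ S) (h2 : u ∉ S) :
    mex S = u := by
  have hu : u ∈ {g : ℕ | g ∉ S} := h2
  refine le_antisymm (Nat.sInf_le hu) (le_csInf ⟨u, hu⟩ ?_)
  intro b hb
  by_contra hlt
  exact hb (h1 b (by omega))

/-! ### Tetris function basics -/

lemma tetrisReach_iff {x : Fin n → ℕ} {N : ℕ} :
    TetrisReach F x N ↔ ∃ f : ℕ → Finset (Fin n), (∀ j < N, f j ∈ F) ∧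
      ∀ j ≤ N, ∀ i, (∑ l ∈ Finset.range j, if i ∈ f l then 1 else 0) ≤ x i := by
  constructor
  · rintro ⟨f, hf, hs⟩
    refine ⟨f, hf, ?_⟩
    intro j hj i
    match j with
    | 0 => simp
    | j+1 => exact hs j (by omega) i
  · rintro ⟨f, hf, hs⟩
    exact ⟨f, hf, fun j hj i => hs (j+1) (by omega) i⟩

lemma tetrisReach_zero (x : Fin n → ℕ) : TetrisReach F x 0 :=
  ⟨fun _ => ∅, fun j hj => absurd hj (Nat.not_lt_zero j),
    fun j hj => absurd hj (Nat.not_lt_zero j)⟩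

lemma TetrisReach.le_sum (h₀ : ∅ ∉ F) {x : Fin n → ℕ} {N : ℕ}
    (h : TetrisReach F x N) : N ≤ ∑ i, x i := by
  rw [tetrisReach_iff] at h
  obtain ⟨f, hf, hs⟩ := h
  calc N = ∑ _l ∈ Finset.range N, 1 := by simp
  _ ≤ ∑ l ∈ Finset.range N, (f l).card := by
      refine Finset.sum_le_sum fun l hl => ?_
      refine Finset.card_pos.mpr (Finset.nonempty_of_ne_empty ?_)
      intro he
      have := hf l (Finset.mem_range.mp hl)
      rw [he] at this
      exact h₀ this
  _ = ∑ l ∈ Finset.range N, ∑ i : Fin n, (if i ∈ f l then 1 else 0) := by simp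
  _ = ∑ i : Fin n, ∑ l ∈ Finset.range N, (if i ∈ f l then 1 else 0) := Finset.sum_comm
  _ ≤ ∑ i, x i := Finset.sum_le_sum fun i _ => hs N le_rfl i

lemma bddAbove_tetris (h₀ : ∅ ∉ F) (x : Fin n → ℕ) :
    BddAbove {N | TetrisReach F x N} :=
  ⟨∑ i, x i, fun _N hN => hN.le_sum h₀⟩

lemma le_tetris (h₀ : ∅ ∉ F) {x : Fin n → ℕ} {N : ℕ} (h : TetrisReach F x N) :
    N ≤ tetris F x :=
  le_csSup (bddAbove_tetris h₀ x) h

lemma tetris_reach (h₀ : ∅ ∉ F) (x : Fin n → ℕ) : TetrisReach F x (tetris F x) := by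
  have h1 : {N | TetrisReach F x N}.Nonempty := ⟨0, show TetrisReach F x 0 from tetrisReach_zero x⟩
  exact Nat.sSup_mem h1 (bddAbove_tetris h₀ x)

/-- appending `k` plays of a fixed edge: if `z + k·e ≤ x` then `T(z) + k ≤ T(x)`. -/
lemma tetris_add (h₀ : ∅ ∉ F) (hne : F.Nonempty) {z x : Fin n → ℕ} (k : ℕ)
    (h : ∀ i, z i + k ≤ x i) : tetris F z + k ≤ tetris F x := by
  obtain ⟨H₀, hH₀⟩ := hne
  set N := tetris F z with hN
  obtain ⟨f, hf, hs⟩ := tetrisReach_iff.mp (tetris_reach h₀ z)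
  apply le_tetris h₀
  rw [tetrisReach_iff]
  refine ⟨fun j => if j < N then f j else H₀, ?_, ?_⟩
  · intro j _hj
    by_cases hjN : j < N
    · simpa [hjN] using hf j hjN
    · simpa [hjN] using hH₀
  · intro j hj i
    rcases le_or_gt j N with hjN | hjN
    · have : (∑ l ∈ Finset.range j, if i ∈ (if l < N then f l else H₀) then 1 else 0)
          = ∑ l ∈ Finset.range j, if i ∈ f l then 1 else 0 := by
        refine Finset.sum_congr rfl fun l hl => ?_
        have : l < N := lt_of_lt_of_le (Finset.mem_range.mp hl) hjN
        simp [this]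
      rw [this]
      have := hs j hjN i
      have := h i
      omega
    · show (∑ l ∈ Finset.range j, if i ∈ (if l < N then f l else H₀) then 1 else 0) ≤ x i
      have hsplit : Finset.range j = Finset.Ico 0 N ∪ Finset.Ico N j := by
        rw [Finset.range_eq_Ico, Finset.Ico_union_Ico_eq_Ico (by omega) (by omega)]
      rw [hsplit, Finset.sum_union (by
        simp [Finset.disjoint_left]
        intro a ha1 ha2; omega)]
      have h1 : (∑ l ∈ Finset.Ico 0 N, if i ∈ (if l < N then f l else H₀) then 1 else 0)
          ≤ z i := by
        rw [show Finset.Ico 0 N = Finset.range N by rw [Finset.range_eq_Ico]]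
        have : (∑ l ∈ Finset.range N, if i ∈ (if l < N then f l else H₀) then 1 else 0)
            = ∑ l ∈ Finset.range N, if i ∈ f l then 1 else 0 := by
          refine Finset.sum_congr rfl fun l hl => ?_
          simp [Finset.mem_range.mp hl]
        rw [this]; exact hs N le_rfl i
      have h2 : (∑ l ∈ Finset.Ico N j, if i ∈ (if l < N then f l else H₀) then 1 else 0)
          ≤ j - N := by
        calc (∑ l ∈ Finset.Ico N j, if i ∈ (if l < N then f l else H₀) then 1 else 0)
            ≤ ∑ _l ∈ Finset.Ico N j, 1 := Finset.sum_le_sum (fun l _ => by split <;> split <;> omega)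
        _ = j - N := by simp
      have := h i
      omega

/-- prepending the move: any move strictly decreases the Tetris value. -/
lemma tetris_move_lt (h₀ : ∅ ∉ F) {x x' : Fin n → ℕ} (h : Move F x x') :
    tetris F x' + 1 ≤ tetris F x := by
  obtain ⟨H, hH, hlt, heq⟩ := h
  obtain ⟨f, hf, hs⟩ := tetrisReach_iff.mp (tetris_reach h₀ x')
  apply le_tetris h₀
  rw [tetrisReach_iff]
  refine ⟨fun j => if j = 0 then H else f (j-1), ?_, ?_⟩
  · intro j _hj
    by_cases h0 : j = 0
    · simpa [h0] using hH
    · simpa [h0] using hf (j-1) (by omega)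
  · intro j hj i
    match j with
    | 0 => simp
    | j+1 =>
      have hrw : (∑ l ∈ Finset.range (j+1), if i ∈ (if l = 0 then H else f (l-1)) then 1 else 0)
           = (∑ l ∈ Finset.range j, (if i ∈ f l then 1 else 0)) + (if i ∈ H then 1 else 0) := by
        rw [Finset.sum_range_succ']
        simp
      rw [hrw]
      have hsj := hs j (by omega) i
      by_cases hiH : i ∈ H
      · have := hlt i hiH
        simp only [hiH, if_true]
        omega
      · rw [heq i hiH] at hsj
        simp only [hiH, if_false]
        omega

/-! ### mval basics and move lemmas -/

lemma mval_le (x : Fin n → ℕ) (i : Fin n) : mval x ≤ x i := Nat.sInf_le ⟨i, rfl⟩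

lemma exists_mval [NeZero n] (x : Fin n → ℕ) : ∃ i, x i = mval x := by
  have hne : (Set.range x).Nonempty := ⟨x ⟨0, Nat.pos_of_ne_zero (NeZero.ne n)⟩, Set.mem_range_self _⟩
  exact Nat.sInf_mem hne

lemma move_le {x x' : Fin n → ℕ} (h : Move F x x') (i : Fin n) : x' i ≤ x i := by
  obtain ⟨H, _, hlt, heq⟩ := h
  by_cases hi : i ∈ H
  · exact (hlt i hi).le
  · exact (heq i hi).le

lemma move_mval_le [NeZero n] {x x' : Fin n → ℕ} (h : Move F x x') :
    mval x' ≤ mval x := by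
  obtain ⟨i, hi⟩ := exists_mval x
  calc mval x' ≤ x' i := mval_le x' i
  _ ≤ x i := move_le h i
  _ = mval x := hi

lemma move_sum_lt (h₀ : ∅ ∉ F) {x x' : Fin n → ℕ} (h : Move F x x') :
    ∑ i, x' i < ∑ i, x i := by
  obtain ⟨H, hH, hlt, heq⟩ := h
  obtain ⟨i₀, hi₀⟩ : H.Nonempty := Finset.nonempty_of_ne_empty (by rintro rfl; exact h₀ hH)
  refine Finset.sum_lt_sum (fun i _ => move_le ⟨H, hH, hlt, heq⟩ i) ⟨i₀, Finset.mem_univ i₀, hlt i₀ hi₀⟩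

/-- a move preserving the minimum induces a move on the reduced position. -/
lemma move_shift {x x' : Fin n → ℕ} (h : Move F x x') (hm : mval x' = mval x) :
    Move F (fun i => x i - mval x) (fun i => x' i - mval x') := by
  obtain ⟨H, hH, hlt, heq⟩ := h
  refine ⟨H, hH, fun i hi => ?_, fun i hi => by simp [heq i hi, hm]⟩
  have h1 : mval x ≤ x' i := hm ▸ mval_le x' i
  have h2 := hlt i hi
  simp only [hm]
  omega

lemma move_yval_lt (h₀ : ∅ ∉ F) {x x' : Fin n → ℕ} (h : Move F x x')
    (hm : mval x' = mval x) : yval F x' < yval F x := by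
  have := tetris_move_lt h₀ (move_shift h hm)
  unfold yval
  omega

/-- (uses A0) after a move, `y(x') > m(x) − m(x')`. -/
lemma move_yval_ge (h₀ : ∅ ∉ F) (hA0 : TransversalFree F) {x x' : Fin n → ℕ}
    (h : Move F x x') : mval x - mval x' < yval F x' := by
  obtain ⟨H, hH, hlt, heq⟩ := h
  obtain ⟨H', hH', hdisj⟩ : ∃ H' ∈ F, H ∩ H' = ∅ := by
    have ht := hA0 H hH
    unfold IsTransversal at ht
    push_neg at ht
    obtain ⟨H', h1, h2⟩ := ht
    exact ⟨H', h1, h2⟩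
  have hreach : TetrisReach F (fun i => x' i - mval x') (mval x - mval x') := by
    refine ⟨fun _ => H', fun _ _ => hH', ?_⟩
    intro j hj i
    by_cases hi : i ∈ H'
    · have hiH : i ∉ H := fun hc =>
        (Finset.eq_empty_iff_forall_notMem.mp hdisj i) (Finset.mem_inter.mpr ⟨hc, hi⟩)
      have hxx : x' i = x i := heq i hiH
      have hx : mval x ≤ x i := mval_le x i
      have hsum : (∑ l ∈ Finset.range (j+1), if i ∈ H' then 1 else 0) = j+1 := by simp [hi]
      show (∑ l ∈ Finset.range (j+1), if i ∈ H' then 1 else 0) ≤ x' i - mval x'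
      rw [hsum, hxx]
      omega
    · simp [hi]
  have := le_tetris h₀ hreach
  unfold yval
  omega

lemma mval_add_le_tetris (h₀ : ∅ ∉ F) (hne : F.Nonempty) (x : Fin n → ℕ) :
    mval x + (yval F x - 1) ≤ tetris F x := by
  have := tetris_add h₀ hne (z := fun i => x i - mval x) (x := x) (mval x)
    (fun i => by show x i - mval x + mval x ≤ x i; have := mval_le x i; omega)
  unfold yval
  omega

lemma yval_pos (x : Fin n → ℕ) : 1 ≤ yval F x := by unfold yval; omega

lemma vval_lt_mval {x : Fin n → ℕ} (hshort : ¬ mval x ≤ (yval F x).choose 2) :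
    vval F x < mval x := by
  unfold vval
  have h1 : (mval x - (yval F x).choose 2 - 1) % yval F x
      ≤ mval x - (yval F x).choose 2 - 1 := Nat.mod_le _ _
  omega

lemma vval_lt (x : Fin n → ℕ) : vval F x < (yval F x).choose 2 + yval F x := by
  unfold vval
  have : (mval x - (yval F x).choose 2 - 1) % yval F x < yval F x :=
    Nat.mod_lt _ (by have := yval_pos (F := F) x; omega)
  omega

lemma choose_le_vval (x : Fin n → ℕ) : (yval F x).choose 2 ≤ vval F x :=
  Nat.le_add_right _ _

end JMaux

/-- Lemma (sufficient conditions for JM): if (A0), (B1), (C2), (C3) hold,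
then `𝓗` is a JM hypergraph. -/
theorem isJM_of_conditions
    (n : ℕ) (F : Set (Finset (Fin n))) (hne : F.Nonempty) (hnem : ∅ ∉ F)
    (hA0 : TransversalFree F)
    (hB1 : ∀ x : Fin n → ℕ, IsLong F x → ∀ z : ℕ, mval x ≤ z → z < tetris F x →
      ∃ x', Move F x x' ∧ IsLong F x' ∧ tetris F x' = z)
    (hC2 : ∀ x : Fin n → ℕ, ∀ η : ℕ, 1 ≤ η → η < yval F x →
      ∃ x', Move F x x' ∧ mval x' = mval x ∧ yval F x' = η)
    (hC3 : ∀ x : Fin n → ℕ, ∀ μ η : ℕ, μ < mval x → mval x - μ + 1 ≤ η → η ≤ yval F x →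
      ∃ x', Move F x x' ∧ mval x' = μ ∧ yval F x' = η) :
    IsJM F := by
  obtain ⟨H₀, hH₀⟩ := hne
  rcases Nat.eq_zero_or_pos n with hn | hn
  · subst hn
    rw [Finset.eq_empty_of_isEmpty H₀] at hH₀
    exact absurd hH₀ hnem
  haveI : NeZero n := ⟨by omega⟩
  suffices Hmain : ∀ s, ∀ x : Fin n → ℕ, ∑ i, x i ≤ s → grundy F x = jmU F x by
    exact fun x => Hmain (∑ i, x i) x le_rfl
  intro s
  induction s using Nat.strong_induction_on with
  | _ s IH =>
  intro x hxs
  have IH' : ∀ x' : Fin n → ℕ, Move F x x' → grundy F x' = jmU F x' := by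
    intro x' hmv
    have hlt := move_sum_lt hnem hmv
    exact IH (∑ i, x' i) (by omega) x' le_rfl
  have hy1 : 1 ≤ yval F x := yval_pos x
  -- Claim B : no move keeps the JM value
  have claimB : ∀ x' : Fin n → ℕ, Move F x x' → jmU F x' ≠ jmU F x := by
    intro x' hmv
    have hm'le : mval x' ≤ mval x := move_mval_le hmv
    have hy1' : 1 ≤ yval F x' := yval_pos x'
    unfold jmU
    by_cases hxl : mval x ≤ (yval F x).choose 2 <;>
      by_cases hxl' : mval x' ≤ (yval F x').choose 2
    · rw [if_pos hxl, if_pos hxl']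
      have h1 := tetris_move_lt hnem hmv
      omega
    · rw [if_pos hxl, if_neg hxl']
      have h1 : vval F x' < mval x' := vval_lt_mval hxl'
      have h2 := mval_add_le_tetris hnem ⟨H₀, hH₀⟩ x
      omega
    · rw [if_neg hxl, if_pos hxl']
      have h1 : mval x - mval x' < yval F x' := move_yval_ge hnem hA0 hmv
      have h2 := mval_add_le_tetris hnem ⟨H₀, hH₀⟩ x'
      have h3 : vval F x < mval x := vval_lt_mval hxl
      omega
    · rw [if_neg hxl, if_neg hxl']
      intro hvv
      have hyy : yval F x' = yval F x :=
        v_interval_eq hy1' hy1 (choose_le_vval x') (vval_lt x')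
          (by rw [hvv]; exact choose_le_vval x) (by rw [hvv]; exact vval_lt x)
      rw [hyy] at hxl'
      have hmm' : mval x' < mval x := by
        rcases lt_or_eq_of_le hm'le with h | h
        · exact h
        · exact absurd (move_yval_lt hnem hmv h) (by omega)
      have h6 : mval x - mval x' < yval F x' := move_yval_ge hnem hA0 hmv
      have hA : (mval x - (yval F x).choose 2 - 1) % yval F x
              = (mval x' - (yval F x).choose 2 - 1) % yval F x := by
        have h7 := hvv
        unfold vval at h7
        rw [hyy] at h7
        omega
      have hBA : mval x' - (yval F x).choose 2 - 1 ≤ mval x - (yval F x).choose 2 - 1 := by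
        omega
      have hdvd : yval F x ∣
          (mval x - (yval F x).choose 2 - 1) - (mval x' - (yval F x).choose 2 - 1) :=
        (Nat.modEq_iff_dvd' hBA).mp hA.symm
      have hpos : 0 < (mval x - (yval F x).choose 2 - 1) - (mval x' - (yval F x).choose 2 - 1) := by
        omega
      have h8 := Nat.le_of_dvd hpos hdvd
      omega
  -- Key construction : reach any value g < mval x via a short position
  have key : ∀ g : ℕ, g < mval x → etaOf g ≤ yval F x →
      (etaOf g = yval F x → (mval x - g - 1) % etaOf g ≠ 0) →
      ∃ x', Move F x x' ∧ jmU F x' = g := by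
    intro g hgm hηy hextra
    have hη1 : 1 ≤ etaOf g := etaOf_pos g
    have hCg : (etaOf g).choose 2 ≤ g := etaOf_spec g
    have hgC : g < (etaOf g).choose 2 + etaOf g := etaOf_lt g
    set η := etaOf g with hηdef
    set d := (mval x - g - 1) % η with hd
    have hdlt : d < η := Nat.mod_lt _ (by omega)
    have hdle : d ≤ mval x - g - 1 := Nat.mod_le _ _
    have hdiv := Nat.div_add_mod (mval x - g - 1) η
    obtain ⟨x', hmv, hμ, hη'⟩ :
        ∃ x', Move F x x' ∧ mval x' = mval x - d ∧ yval F x' = η := by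
      rcases Nat.eq_zero_or_pos d with h0 | h0
      · have hηlt : η < yval F x := by
          rcases lt_or_eq_of_le hηy with h | h
          · exact h
          · exact absurd h0 (hextra h)
        obtain ⟨x', hmv, h1, h2⟩ := hC2 x η hη1 hηlt
        exact ⟨x', hmv, by omega, h2⟩
      · obtain ⟨x', hmv, h1, h2⟩ := hC3 x (mval x - d) η (by omega) (by omega) hηy
        exact ⟨x', hmv, h1, h2⟩
    refine ⟨x', hmv, ?_⟩
    have hshort : ¬ mval x' ≤ (yval F x').choose 2 := by
      rw [hη', hμ]
      omega
    unfold jmU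
    rw [if_neg hshort]
    unfold vval
    rw [hη', hμ]
    have hrw : mval x - d - η.choose 2 - 1
        = (g - η.choose 2) + η * ((mval x - g - 1) / η) := by
      omega
    rw [hrw, Nat.add_mul_mod_self_left, Nat.mod_eq_of_lt (by omega)]
    omega
  -- Claim A : every value below the JM value is reached by a move
  have claimA : ∀ g : ℕ, g < jmU F x → ∃ x', Move F x x' ∧ jmU F x' = g := by
    intro g hg
    by_cases hxl : mval x ≤ (yval F x).choose 2
    · unfold jmU at hg
      rw [if_pos hxl] at hg
      rcases lt_or_ge g (mval x) with hgm | hgm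
      · have hCg := etaOf_spec g
        have hη1 := etaOf_pos g
        have hηy : etaOf g < yval F x := by
          by_contra hc
          push_neg at hc
          have := Nat.choose_le_choose 2 hc
          omega
        exact key g hgm hηy.le (fun he => absurd he (by omega))
      · obtain ⟨x', hmv, hlong, hT⟩ := hB1 x hxl g hgm hg
        refine ⟨x', hmv, ?_⟩
        have hlong' : mval x' ≤ (yval F x').choose 2 := hlong
        unfold jmU
        rw [if_pos hlong']
        exact hT
    · unfold jmU at hg
      rw [if_neg hxl] at hg
      have hvm : vval F x < mval x := vval_lt_mval hxl
      have hgm : g < mval x := by omega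
      have hCg := etaOf_spec g
      have hη1 := etaOf_pos g
      have hgC := etaOf_lt g
      have hηy : etaOf g ≤ yval F x := by
        by_contra hc
        push_neg at hc
        have h2 : (yval F x + 1).choose 2 ≤ (etaOf g).choose 2 := Nat.choose_le_choose 2 hc
        have h3 := choose_two_succ (yval F x)
        have h4 := vval_lt (F := F) x
        omega
      refine key g hgm hηy ?_
      intro he
      rw [he] at hCg
      have hvx : vval F x
          = (yval F x).choose 2 + (mval x - (yval F x).choose 2 - 1) % yval F x := rfl
      have hdiv := Nat.div_add_mod (mval x - (yval F x).choose 2 - 1) (yval F x)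
      have hr0lt : (mval x - (yval F x).choose 2 - 1) % yval F x < yval F x :=
        Nat.mod_lt _ (by omega)
      have ha : mval x - g - 1
          = yval F x * ((mval x - (yval F x).choose 2 - 1) / yval F x)
            + (((yval F x).choose 2 + (mval x - (yval F x).choose 2 - 1) % yval F x) - g) := by
        omega
      rw [he, ha, Nat.mul_add_mod, Nat.mod_eq_of_lt (by omega)]
      omega
  -- conclusion via mex
  rw [grundy]
  have hset : {g : ℕ | ∃ x', ∃ _h : Move F x x' ∧ (∑ i, x' i) < ∑ i, x i, grundy F x' = g}
      = {g : ℕ | ∃ x', Move F x x' ∧ jmU F x' = g} := by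
    ext g
    constructor
    · rintro ⟨x', ⟨hmv, -⟩, hgr⟩
      exact ⟨x', hmv, by rw [← IH' x' hmv]; exact hgr⟩
    · rintro ⟨x', hmv, hU⟩
      exact ⟨x', ⟨hmv, move_sum_lt hnem hmv⟩, by rw [IH' x' hmv]; exact hU⟩
  rw [hset]
  apply mex_eq_of
  · intro g hgu
    exact claimA g hgu
  · rintro ⟨x', hmv, hU⟩
    exact claimB x' hmv hU
end

section
/- Let V = {1,…,n}, let λ = (λ_1,…,λ_k) be an integer sequence with 1 < λ_1 < ⋯ < λ_k ≤ n satisfying λ_{i+1} − λ_i ≤ λ_1 for all i = 1,…,k−1 and λ_1 + λ_k = n, and let 𝓗 = 𝓗(λ). Then for every position x ∈ ℤ_{≥0}^V and all integers μ, η with 0 ≤ μ < m(x) and m(x) − μ + 1 ≤ η ≤ y_𝓗(x), there exists a move x → x' such that m(x') = μ and y_𝓗(x') = η. -/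
open Finset

/-- Usage-only form of reachability. -/
def UsageReach {n : ℕ} (F : Set (Finset (Fin n))) (z : Fin n → ℕ) (N : ℕ) : Prop :=
  ∃ f : ℕ → Finset (Fin n), (∀ j < N, f j ∈ F) ∧
    ∀ i, (∑ l ∈ Finset.range N, if i ∈ f l then 1 else 0) ≤ z i

section Aux
variable {n : ℕ} {F : Set (Finset (Fin n))} {z z' : Fin n → ℕ} {N : ℕ}

lemma tetrisReach_iff_usage : TetrisReach F z N ↔ UsageReach F z N := by
  constructor
  · rintro ⟨f, h1, h2⟩
    refine ⟨f, h1, fun i => ?_⟩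
    rcases Nat.eq_zero_or_pos N with h | h
    · simp [h]
    · have := h2 (N - 1) (by omega) i
      have hN : N - 1 + 1 = N := by omega
      rwa [hN] at this
  · rintro ⟨f, h1, h2⟩
    refine ⟨f, h1, fun j hj i => ?_⟩
    calc ∑ l ∈ Finset.range (j + 1), (if i ∈ f l then 1 else 0)
        ≤ ∑ l ∈ Finset.range N, (if i ∈ f l then 1 else 0) :=
          Finset.sum_le_sum_of_subset (Finset.range_subset_range.2 (by omega))
      _ ≤ z i := h2 i

lemma reach_le_sum (hF : ∀ H ∈ F, H.Nonempty) (h : TetrisReach F z N) :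
    N ≤ ∑ i, z i := by
  rw [tetrisReach_iff_usage] at h
  obtain ⟨f, h1, h2⟩ := h
  calc N = ∑ _l ∈ Finset.range N, 1 := by simp
    _ ≤ ∑ l ∈ Finset.range N, ∑ i, (if i ∈ f l then 1 else 0) := by
        apply Finset.sum_le_sum; intro l hl
        obtain ⟨i, hi⟩ := hF (f l) (h1 l (Finset.mem_range.1 hl))
        calc (1 : ℕ) = (if i ∈ f l then 1 else 0) := by simp [hi]
          _ ≤ ∑ i, (if i ∈ f l then 1 else 0) :=
            Finset.single_le_sum (f := fun i => if i ∈ f l then (1:ℕ) else 0)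
              (by intro j _; positivity) (mem_univ i)
    _ = ∑ i, ∑ l ∈ Finset.range N, (if i ∈ f l then 1 else 0) := Finset.sum_comm
    _ ≤ ∑ i, z i := Finset.sum_le_sum (fun i _ => h2 i)

lemma reach_zero : TetrisReach F z 0 :=
  ⟨fun _ => ∅, by simp, by simp⟩

lemma reach_bddAbove (hF : ∀ H ∈ F, H.Nonempty) :
    BddAbove {N | TetrisReach F z N} :=
  ⟨∑ i, z i, fun _ h => reach_le_sum hF h⟩

lemma le_tetris_s14 (hF : ∀ H ∈ F, H.Nonempty) (h : TetrisReach F z N) :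
    N ≤ tetris F z :=
  le_csSup (reach_bddAbove hF) h

lemma tetris_reach_s14 (hF : ∀ H ∈ F, H.Nonempty) :
    TetrisReach F z (tetris F z) :=
  Nat.sSup_mem (s := {N | TetrisReach F z N}) ⟨0, reach_zero⟩ (reach_bddAbove hF)

lemma tetris_le {B : ℕ} (h : ∀ N, TetrisReach F z N → N ≤ B) :
    tetris F z ≤ B :=
  csSup_le ⟨0, reach_zero⟩ h

lemma reach_mono (hle : ∀ i, z i ≤ z' i) (h : TetrisReach F z N) :
    TetrisReach F z' N := by
  obtain ⟨f, h1, h2⟩ := h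
  exact ⟨f, h1, fun j hj i => le_trans (h2 j hj i) (hle i)⟩

lemma tetris_mono (hF : ∀ H ∈ F, H.Nonempty) (hle : ∀ i, z i ≤ z' i) :
    tetris F z ≤ tetris F z' :=
  le_tetris_s14 hF (reach_mono hle (tetris_reach_s14 hF))

lemma tetris_ge_of_edge (hF : ∀ H ∈ F, H.Nonempty) {A : Finset (Fin n)} {t : ℕ}
    (hA : A ∈ F) (hz : ∀ i ∈ A, t ≤ z i) : t ≤ tetris F z := by
  apply le_tetris_s14 hF
  rw [tetrisReach_iff_usage]
  refine ⟨fun _ => A, fun _ _ => hA, fun i => ?_⟩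
  by_cases hi : i ∈ A
  · simpa [hi] using hz i hi
  · simp [hi]

lemma tetris_le_of_forced {q : Fin n}
    (hq : ∀ E ∈ F, (∀ i ∈ E, 1 ≤ z i) → q ∈ E) :
    tetris F z ≤ z q := by
  apply tetris_le
  intro N h
  rw [tetrisReach_iff_usage] at h
  obtain ⟨f, h1, h2⟩ := h
  have hqf : ∀ l < N, q ∈ f l := by
    intro l hl
    apply hq _ (h1 l hl)
    intro i hi
    calc (1:ℕ) = (if i ∈ f l then 1 else 0) := by simp [hi]
      _ ≤ ∑ l' ∈ Finset.range N, (if i ∈ f l' then 1 else 0) :=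
        Finset.single_le_sum (f := fun l' => if i ∈ f l' then (1:ℕ) else 0)
          (by intro j _; positivity) (Finset.mem_range.2 hl)
      _ ≤ z i := h2 i
  calc N = ∑ _l ∈ Finset.range N, 1 := by simp
    _ ≤ ∑ l ∈ Finset.range N, (if q ∈ f l then 1 else 0) := by
        apply Finset.sum_le_sum; intro l hl
        simp [hqf l (Finset.mem_range.1 hl)]
    _ ≤ z q := h2 q

lemma tetris_update_le (hF : ∀ H ∈ F, H.Nonempty) (z : Fin n → ℕ) (i : Fin n) :
    tetris F (Function.update z i (z i + 1)) ≤ tetris F z + 1 := by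
  set z' := Function.update z i (z i + 1) with hz'
  have hz'i : z' i = z i + 1 := by simp [hz']
  have hz'o : ∀ i', i' ≠ i → z' i' = z i' := fun i' h => Function.update_of_ne h _ _
  have h := tetris_reach_s14 (z := z') hF
  set N := tetris F z' with hNdef
  rw [tetrisReach_iff_usage] at h
  obtain ⟨f, h1, h2⟩ := h
  by_cases hc : (∑ l ∈ Finset.range N, if i ∈ f l then 1 else 0) ≤ z i
  · have : UsageReach F z N := by
      refine ⟨f, h1, fun i' => ?_⟩
      by_cases hii : i' = i
      · subst hii; exact hc
      · exact le_trans (h2 i') (le_of_eq (hz'o i' hii))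
    have := le_tetris_s14 hF (tetrisReach_iff_usage.2 this)
    omega
  · push_neg at hc
    have hub := h2 i
    rw [hz'i] at hub
    have hex : ∃ j0, j0 < N ∧ i ∈ f j0 := by
      by_contra hno
      push_neg at hno
      have : (∑ l ∈ Finset.range N, if i ∈ f l then 1 else 0) = 0 :=
        Finset.sum_eq_zero (fun l hl => by simp [hno l (Finset.mem_range.1 hl)])
      omega
    obtain ⟨j0, hj0, hij0⟩ := hex
    have hN1 : 1 ≤ N := by omega
    set g : ℕ → Finset (Fin n) := fun l => if l = j0 then f (N - 1) else f l with hg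
    have key : ∀ i' : Fin n, (∑ l ∈ Finset.range (N - 1), if i' ∈ g l then 1 else 0)
        = (∑ l ∈ (Finset.range N).erase j0, if i' ∈ f l then 1 else 0) := by
      intro i'
      rcases eq_or_lt_of_le (Nat.succ_le_of_lt hj0) with hcase | hcase
      · -- j0 = N - 1
        have hj0N : j0 = N - 1 := by omega
        have hset : (Finset.range N).erase j0 = Finset.range (N - 1) := by
          ext m; simp only [Finset.mem_erase, Finset.mem_range]; omega
        rw [hset]
        apply Finset.sum_congr rfl
        intro l hl
        have : l ≠ j0 := by
          have := Finset.mem_range.1 hl; omega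
        simp [hg, this]
      · -- j0 < N - 1
        have hj0lt : j0 < N - 1 := by omega
        have hset : (Finset.range N).erase j0
            = insert (N - 1) ((Finset.range (N - 1)).erase j0) := by
          ext m
          simp only [Finset.mem_erase, Finset.mem_range, Finset.mem_insert]
          omega
        have hsplit : Finset.range (N - 1)
            = insert j0 ((Finset.range (N - 1)).erase j0) :=
          (Finset.insert_erase (Finset.mem_range.2 hj0lt)).symm
        have hgj0 : g j0 = f (N - 1) := by simp [hg]
        have hrest : ∀ l ∈ (Finset.range (N - 1)).erase j0,
            (if i' ∈ g l then (1:ℕ) else 0) = (if i' ∈ f l then 1 else 0) := by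
          intro l hl
          have : l ≠ j0 := (Finset.mem_erase.1 hl).1
          simp [hg, this]
        rw [hset, Finset.sum_insert (by simp)]
        conv_lhs => rw [hsplit]
        rw [Finset.sum_insert (by simp)]
        rw [Finset.sum_congr rfl hrest, hgj0]
    have husage : UsageReach F z (N - 1) := by
      refine ⟨g, ?_, ?_⟩
      · intro j hj
        by_cases hjj : j = j0
        · simp only [hg, hjj, if_pos rfl]
          exact h1 (N - 1) (by omega)
        · simp only [hg, if_neg hjj]
          exact h1 j (by omega)
      · intro w
        rw [key w]
        have hadd : (if w ∈ f j0 then (1:ℕ) else 0)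
            + (∑ l ∈ (Finset.range N).erase j0, if w ∈ f l then 1 else 0)
            = ∑ l ∈ Finset.range N, if w ∈ f l then 1 else 0 :=
          Finset.add_sum_erase (Finset.range N) (fun l => if w ∈ f l then (1:ℕ) else 0)
            (Finset.mem_range.2 hj0)
        by_cases hii : w = i
        · subst hii
          have : (if w ∈ f j0 then (1:ℕ) else 0) = 1 := by simp [hij0]
          omega
        · have := h2 w
          rw [hz'o w hii] at this
          omega
    have := le_tetris_s14 hF (tetrisReach_iff_usage.2 husage)
    omega

lemma tetris_ivt (hF : ∀ H ∈ F, H.Nonempty) (t : ℕ) :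
    ∀ d (z₁ z₂ : Fin n → ℕ), (∑ i, z₂ i) - (∑ i, z₁ i) = d →
    (∀ i, z₁ i ≤ z₂ i) → tetris F z₁ ≤ t → t ≤ tetris F z₂ →
    ∃ z, (∀ i, z₁ i ≤ z i) ∧ (∀ i, z i ≤ z₂ i) ∧ tetris F z = t := by
  intro d
  induction d using Nat.strong_induction_on with
  | _ d ih =>
    intro z₁ z₂ hd hle h1 h2
    by_cases heq : tetris F z₁ = t
    · exact ⟨z₁, fun i => le_refl _, hle, heq⟩
    have hlt : tetris F z₁ < t := lt_of_le_of_ne h1 heq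
    have hne : ∃ i, z₁ i < z₂ i := by
      by_contra hno
      push_neg at hno
      have hfe : z₁ = z₂ := funext (fun i => le_antisymm (hle i) (hno i))
      rw [hfe] at hlt
      omega
    obtain ⟨i, hi⟩ := hne
    set z₁' := Function.update z₁ i (z₁ i + 1) with hz₁'
    have hle0 : ∀ i', z₁ i' ≤ z₁' i' := by
      intro i'
      by_cases hii : i' = i
      · subst hii; simp [hz₁']
      · simp [hz₁', Function.update_of_ne hii]
    have hle' : ∀ i', z₁' i' ≤ z₂ i' := by
      intro i'
      by_cases hii : i' = i
      · subst hii; simpa [hz₁'] using hi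
      · simpa [hz₁', Function.update_of_ne hii] using hle i'
    have h1' : tetris F z₁' ≤ t := le_trans (tetris_update_le hF z₁ i) (by omega)
    have hsum : ∑ i', z₁' i' = (∑ i', z₁ i') + 1 := by
      rw [hz₁', Finset.sum_update_of_mem (Finset.mem_univ i)]
      have h2 := Finset.add_sum_erase Finset.univ z₁ (Finset.mem_univ i)
      rw [Finset.erase_eq] at h2
      omega
    have hsle : (∑ i', z₁' i') ≤ ∑ i', z₂ i' := Finset.sum_le_sum (fun i' _ => hle' i')
    have hd1 : 1 ≤ d := by omega
    obtain ⟨z, ha, hb, hc⟩ := ih (d - 1) (by omega) z₁' z₂ (by omega) hle' h1' h2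
    exact ⟨z, fun i' => le_trans (hle0 i') (ha i'), hb, hc⟩

lemma build_move (hF : ∀ H ∈ F, H.Nonempty) (x : Fin n → ℕ) (μ t : ℕ)
    (H : Finset (Fin n)) (p : Fin n) (hp : p ∈ H) (hHF : H ∈ F)
    (hμx : ∀ i, μ < x i) [Nonempty (Fin n)]
    (hlow : tetris F (fun i => if i ∈ H then 0 else x i - μ) ≤ t)
    (hhigh : t ≤ tetris F (fun i => if i = p then 0 else if i ∈ H then x i - 1 - μ else x i - μ)) :
    ∃ x', Move F x x' ∧ mval x' = μ ∧ yval F x' = t + 1 := by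
  set low : Fin n → ℕ := fun i => if i ∈ H then 0 else x i - μ with hlowdef
  set high : Fin n → ℕ :=
    fun i => if i = p then 0 else if i ∈ H then x i - 1 - μ else x i - μ with hhighdef
  have hlh : ∀ i, low i ≤ high i := by
    intro i
    by_cases hip : i = p
    · subst hip; simp [hlowdef, hhighdef, hp]
    · by_cases hiH : i ∈ H <;> simp [hlowdef, hhighdef, hip, hiH]
  obtain ⟨z, hz1, hz2, hzt⟩ := tetris_ivt hF t _ low high rfl hlh hlow hhigh
  set x' : Fin n → ℕ := fun i => μ + z i with hx'
  have hx'p : x' p = μ := by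
    have h2 := hz2 p
    simp only [hhighdef, if_pos rfl] at h2
    have : z p = 0 := by omega
    simp [hx', this]
  have hoff : ∀ i ∉ H, x' i = x i := by
    intro i hiH
    have hip : i ≠ p := fun h => hiH (h ▸ hp)
    have h1 := hz1 i
    have h2 := hz2 i
    simp only [hlowdef, if_neg hiH] at h1
    simp only [hhighdef, if_neg hip, if_neg hiH] at h2
    have hμi := hμx i
    simp only [hx']
    omega
  have hin : ∀ i ∈ H, x' i < x i := by
    intro i hiH
    have hμi := hμx i
    by_cases hip : i = p
    · subst hip; rw [hx'p]; exact hμi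
    · have h2 := hz2 i
      simp only [hhighdef, if_neg hip, if_pos hiH] at h2
      simp only [hx']
      omega
  have hmv : mval x' = μ := by
    apply le_antisymm
    · exact Nat.sInf_le ⟨p, hx'p⟩
    · apply le_csInf (Set.range_nonempty x')
      rintro b ⟨i, rfl⟩
      simp only [hx']
      omega
  refine ⟨x', ⟨H, hHF, hin, hoff⟩, hmv, ?_⟩
  have : (fun i => x' i - mval x') = z := by
    funext i
    rw [hmv]
    simp [hx']
  rw [yval, this, hzt]

end Aux

/-- Lemma (C3 for minimal transversal-free symmetric hypergraphs with `λ₁ > 1`). -/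
theorem Hlambda_condition_C3
    (n k : ℕ) (gl : ℕ → ℕ) (hk : 1 ≤ k) (hpos : 1 < gl 1)
    (hmono : ∀ i, 1 ≤ i → i < k → gl i < gl (i + 1)) (hle : gl k ≤ n)
    (hgap : ∀ i, 1 ≤ i → i < k → gl (i + 1) - gl i ≤ gl 1)
    (hsum : gl 1 + gl k = n)
    (x : Fin n → ℕ) (μ η : ℕ) (hμ : μ < mval x)
    (hη1 : mval x - μ + 1 ≤ η) (hη2 : η ≤ yval (Hlambda (n := n) k gl) x) :
    ∃ x', Move (Hlambda (n := n) k gl) x x' ∧ mval x' = μ ∧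
      yval (Hlambda (n := n) k gl) x' = η := by
  classical
  set F := Hlambda (n := n) k gl with hFdef
  have gl_le : ∀ j, 1 ≤ j → j ≤ k → gl 1 ≤ gl j := by
    intro j
    induction j with
    | zero => omega
    | succ j ih =>
      intro h1 h2
      by_cases hj : j = 0
      · subst hj; exact le_refl _
      · exact le_trans (ih (by omega) (by omega))
          (le_of_lt (hmono j (by omega) (by omega)))
  have hglk : gl 1 ≤ gl k := gl_le k hk (le_refl k)
  have hn4 : 4 ≤ n := by omega
  haveI hne : Nonempty (Fin n) := ⟨⟨0, by omega⟩⟩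
  have hF : ∀ H ∈ F, H.Nonempty := by
    rintro H ⟨j, hj1, hjk, hcard⟩
    rw [← Finset.card_pos, hcard]
    have := gl_le j hj1 hjk
    omega
  have hxr : (Set.range x).Nonempty := Set.range_nonempty x
  obtain ⟨istar, hist⟩ := Nat.sInf_mem hxr
  have hist : x istar = mval x := hist
  have hmin : ∀ i, mval x ≤ x i := fun i => Nat.sInf_le ⟨i, rfl⟩
  have h2ne : (Finset.univ.erase istar).Nonempty := by
    rw [← Finset.card_pos, Finset.card_erase_of_mem (Finset.mem_univ _),
      Finset.card_univ, Fintype.card_fin]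
    omega
  obtain ⟨i2, hi2mem, hi2min⟩ := Finset.exists_min_image _ x h2ne
  have hi2star : i2 ≠ istar := (Finset.mem_erase.1 hi2mem).1
  have hm2 : ∀ i, i ≠ istar → x i2 ≤ x i := fun i hi =>
    hi2min i (Finset.mem_erase.2 ⟨hi, Finset.mem_univ i⟩)
  set t := η - 1 with ht
  have hηt : η = t + 1 := by omega
  have htm : mval x - μ ≤ t := by omega
  have hty : t ≤ tetris F (fun i => x i - mval x) := by
    rw [yval] at hη2
    omega
  have hμx : ∀ i, μ < x i := fun i => lt_of_lt_of_le hμ (hmin i)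
  have hcard2 : ((Finset.univ.erase i2).erase istar).card = n - 2 := by
    rw [Finset.card_erase_of_mem
        (Finset.mem_erase.2 ⟨Ne.symm hi2star, Finset.mem_univ _⟩),
      Finset.card_erase_of_mem (Finset.mem_univ _), Finset.card_univ, Fintype.card_fin]
    omega
  have hcard1 : (Finset.univ.erase istar).card = n - 1 := by
    rw [Finset.card_erase_of_mem (Finset.mem_univ _), Finset.card_univ, Fintype.card_fin]
  by_cases hc : x i2 - μ ≤ t
  · -- Case 1 : p = istar, H ∋ istar, i2 ∉ H
    obtain ⟨B, hBsub, hBcard⟩ := Finset.exists_subset_card_eq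
      (s := (Finset.univ.erase i2).erase istar) (n := gl k - 1) (by omega)
    set H : Finset (Fin n) := insert istar B with hH
    have histarB : istar ∉ B := fun h => (Finset.mem_erase.1 (hBsub h)).1 rfl
    have hHcard : H.card = gl k := by
      rw [hH, Finset.card_insert_of_notMem histarB, hBcard]
      omega
    have hHF : H ∈ F := ⟨k, hk, le_refl k, hHcard⟩
    have hpH : istar ∈ H := Finset.mem_insert_self _ _
    have hi2H : i2 ∉ H := by
      rw [hH, Finset.mem_insert]
      rintro (h | h)
      · exact hi2star h
      · exact (Finset.mem_erase.1 (Finset.mem_erase.1 (hBsub h)).2).1 rfl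
    have hlow : tetris F (fun i => if i ∈ H then 0 else x i - μ) ≤ t := by
      have hforce : ∀ E ∈ F,
          (∀ i ∈ E, 1 ≤ (if i ∈ H then 0 else x i - μ)) → i2 ∈ E := by
        rintro E ⟨j, hj1, hjk, hEcard⟩ hsupp
        have hEH : E ⊆ Hᶜ := by
          intro i hi
          have h := hsupp i hi
          rw [Finset.mem_compl]
          intro hiH
          simp [hiH] at h
        have hcardc : Hᶜ.card = gl 1 := by
          rw [Finset.card_compl, hHcard, Fintype.card_fin]
          omega
        have hEeq : E = Hᶜ := Finset.eq_of_subset_of_card_le hEH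
          (by rw [hcardc, hEcard]; exact gl_le j hj1 hjk)
        rw [hEeq, Finset.mem_compl]
        exact hi2H
      have := tetris_le_of_forced (q := i2) hforce
      simp only [hi2H, if_false] at this
      omega
    have hhigh : t ≤ tetris F
        (fun i => if i = istar then 0 else if i ∈ H then x i - 1 - μ else x i - μ) := by
      refine le_trans hty (tetris_mono hF ?_)
      intro i
      by_cases hip : i = istar
      · subst hip
        simp only [if_pos rfl]
        omega
      · have hmi := hmin i
        by_cases hiH : i ∈ H <;> simp only [hip, hiH, if_neg, if_pos, if_false] <;> omega
    obtain ⟨x', hmv, hm', hy'⟩ := build_move hF x μ t H istar hpH hHF hμx hlow hhigh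
    exact ⟨x', hmv, hm', by rw [hy', hηt]⟩
  · -- Case 2 : istar ∉ H
    obtain ⟨H, hHsub, hHcard⟩ := Finset.exists_subset_card_eq
      (s := Finset.univ.erase istar) (n := gl k) (by omega)
    have hHF : H ∈ F := ⟨k, hk, le_refl k, hHcard⟩
    have histarH : istar ∉ H := fun h => (Finset.mem_erase.1 (hHsub h)).1 rfl
    have hHne : H.Nonempty := by
      rw [← Finset.card_pos, hHcard]
      omega
    obtain ⟨p, hp⟩ := hHne
    have hpstar : p ≠ istar := fun h => histarH (h ▸ hp)
    obtain ⟨A, hAsub, hAcard⟩ := Finset.exists_subset_card_eq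
      (s := (Finset.univ.erase istar).erase p) (n := gl k)
      (by
        rw [Finset.card_erase_of_mem
          (Finset.mem_erase.2 ⟨hpstar, Finset.mem_univ _⟩), hcard1]
        omega)
    have hAF : A ∈ F := ⟨k, hk, le_refl k, hAcard⟩
    have hlow : tetris F (fun i => if i ∈ H then 0 else x i - μ) ≤ t := by
      have hforce : ∀ E ∈ F,
          (∀ i ∈ E, 1 ≤ (if i ∈ H then 0 else x i - μ)) → istar ∈ E := by
        rintro E ⟨j, hj1, hjk, hEcard⟩ hsupp
        have hEH : E ⊆ Hᶜ := by
          intro i hi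
          have h := hsupp i hi
          rw [Finset.mem_compl]
          intro hiH
          simp [hiH] at h
        have hcardc : Hᶜ.card = gl 1 := by
          rw [Finset.card_compl, hHcard, Fintype.card_fin]
          omega
        have hEeq : E = Hᶜ := Finset.eq_of_subset_of_card_le hEH
          (by rw [hcardc, hEcard]; exact gl_le j hj1 hjk)
        rw [hEeq, Finset.mem_compl]
        exact histarH
      have := tetris_le_of_forced (q := istar) hforce
      simp only [histarH, if_false] at this
      omega
    have hhigh : t ≤ tetris F
        (fun i => if i = p then 0 else if i ∈ H then x i - 1 - μ else x i - μ) := by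
      apply tetris_ge_of_edge hF hAF
      intro i hiA
      have hip : i ≠ p := (Finset.mem_erase.1 (hAsub hiA)).1
      have histar : i ≠ istar := (Finset.mem_erase.1 (Finset.mem_erase.1 (hAsub hiA)).2).1
      have hxi : x i2 ≤ x i := hm2 i histar
      have hμi := hμx i
      have hμ2 := hμx i2
      by_cases hiH : i ∈ H <;> simp only [hip, hiH, if_neg, if_pos, if_false] <;> omega
    obtain ⟨x', hmv, hm', hy'⟩ := build_move hF x μ t H p hp hHF hμx hlow hhigh
    exact ⟨x', hmv, hm', by rw [hy', hηt]⟩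
end
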